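/- Let I be a weakly polymatroidal ideal of S = K[x_1,...,x_n] with minimal generators u_1 >_purelex u_2 >_purelex ... >_purelex u_t, and suppose x_1 divides u_1,...,u_s but not u_{s+1},...,u_t, where 1 ≤ s ≤ t−1. Then for every i with s+2 ≤ i ≤ t, the colon ideal (u_1,...,u_{i-1}) : u_i contains x_1 together with (u_{s+1},...,u_{i-1}) : u_i, while x_1 ∉ (u_{s+1},...,u_{i-1}) : u_i. -/

import Mathlib

open MvPolynomial

namespace Paper

variable (K : Type) [Field K]

/-- The monomial `x^a` in `K[x_0, …, x_{n-1}]`. -/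
noncomputable def mono (n : ℕ) (a : Fin n → ℕ) : MvPolynomial (Fin n) K :=
  MvPolynomial.monomial (Finsupp.equivFunOnFinite.symm a) 1

/-- A monomial ideal: an ideal generated by the monomials it contains. -/
def IsMonomialIdeal (n : ℕ) (I : Ideal (MvPolynomial (Fin n) K)) : Prop :=
  I = Ideal.span ((mono K n) '' {a | mono K n a ∈ I})

/-- The set of exponent vectors of the minimal monomial generators `G(I)`. -/
def minGen (n : ℕ) (I : Ideal (MvPolynomial (Fin n) K)) : Set (Fin n → ℕ) :=
  {a | mono K n a ∈ I ∧ ∀ i : Fin n, 0 < a i → mono K n (a - Pi.single i 1) ∉ I}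

/-- The monomial ideal generated by a set of exponent vectors. -/
noncomputable def monomialIdealOf (n : ℕ) (A : Set (Fin n → ℕ)) :
    Ideal (MvPolynomial (Fin n) K) :=
  Ideal.span ((mono K n) '' A)

/-- Weakly polymatroidal monomial ideal. -/
def WeaklyPolymatroidal (n : ℕ) (I : Ideal (MvPolynomial (Fin n) K)) : Prop :=
  IsMonomialIdeal K n I ∧
    ∀ a b : Fin n → ℕ, a ∈ minGen K n I → b ∈ minGen K n I →
      ∀ t : Fin n, (∀ s : Fin n, s < t → a s = b s) → b t < a t →
        ∃ j : Fin n, t < j ∧ 0 < b j ∧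
          mono K n (b + Pi.single t 1 - Pi.single j 1) ∈ I

/-- Polymatroidal monomial ideal. -/
def Polymatroidal (n : ℕ) (I : Ideal (MvPolynomial (Fin n) K)) : Prop :=
  IsMonomialIdeal K n I ∧
    (∃ d : ℕ, ∀ a ∈ minGen K n I, ∑ i, a i = d) ∧
    ∀ a b : Fin n → ℕ, a ∈ minGen K n I → b ∈ minGen K n I →
      ∀ i : Fin n, b i < a i →
        ∃ j : Fin n, a j < b j ∧
          (a + Pi.single j 1 - Pi.single i 1) ∈ minGen K n I

/-- `I` has linear quotients with respect to the order `u 0 ≺ u 1 ≺ …` on its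
minimal monomial generators: each colon ideal `(u 0, …, u (i-1)) : u i` is
generated by a subset of the variables. -/
def LinearQuotientsWith (n : ℕ) (I : Ideal (MvPolynomial (Fin n) K)) (t : ℕ)
    (u : Fin t → (Fin n → ℕ)) : Prop :=
  Function.Injective u ∧ Set.range u = minGen K n I ∧
    ∀ i : Fin t, 0 < (i : ℕ) →
      ∃ V : Set (Fin n),
        Submodule.colon (monomialIdealOf K n (u '' {j | (j : ℕ) < (i : ℕ)}))
            (Ideal.span {mono K n (u i)}) =
          Ideal.span ((fun k => (X k : MvPolynomial (Fin n) K)) '' V)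

/-- `pd_R M ≤ d`, defined recursively via kernels of surjections from projectives. -/
def HasProjDimLE (R : Type) [CommRing R] :
    ℕ → ∀ (M : Type) [AddCommGroup M] [Module R M], Prop
  | 0, M, _, _ => Module.Projective R M
  | (d + 1), M, _, _ =>
      ∃ (P : Type) (_ : AddCommGroup P) (_ : Module R P) (f : P →ₗ[R] M),
        Module.Projective R P ∧ Function.Surjective f ∧
          HasProjDimLE R d (LinearMap.ker f)

/-- The projective dimension of `M` over `R`, as an element of `ℕ∞`. -/
noncomputable def projDim (R : Type) [CommRing R] (M : Type) [AddCommGroup M]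
    [Module R M] : ℕ∞ :=
  sInf ((↑) '' {d : ℕ | HasProjDimLE R d M})

/-- The depth of `M` with respect to the ideal `J`: the supremum of the lengths of
`M`-regular sequences consisting of elements of `J`. -/
noncomputable def depth (R : Type) [CommRing R] (J : Ideal R) (M : Type)
    [AddCommGroup M] [Module R M] : ℕ∞ :=
  sSup ((↑) '' {k : ℕ | ∃ rs : List R, rs.length = k ∧ (∀ r ∈ rs, r ∈ J) ∧
    RingTheory.Sequence.IsRegular M rs})

/-- The graded maximal ideal `(x_0, …, x_{n-1})` of `K[x_0, …, x_{n-1}]`. -/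
noncomputable def maxIdeal (n : ℕ) : Ideal (MvPolynomial (Fin n) K) :=
  Ideal.span (Set.range X)

/-- The Stanley space `x^a · K[Z]`, as a `K`-subspace of `K[x_0, …, x_{n-1}]`. -/
noncomputable def stanleySpace (n : ℕ) (a : Fin n → ℕ) (Z : Finset (Fin n)) :
    Submodule K (MvPolynomial (Fin n) K) :=
  Submodule.span K ((fun e => mono K n (a + e)) '' {e | ∀ j, j ∉ Z → e j = 0})

/-- A Stanley decomposition of `S/I`: a `K`-vector space decomposition
`S = I ⊕ (⊕ᵢ x^{a i} K[Z i])`. -/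
def IsStanleyDecOfQuot (n : ℕ) (I : Ideal (MvPolynomial (Fin n) K)) (t : ℕ)
    (a : Fin t → (Fin n → ℕ)) (Z : Fin t → Finset (Fin n)) : Prop :=
  iSupIndep (fun o : Option (Fin t) =>
      o.elim (Submodule.restrictScalars K I) (fun i => stanleySpace K n (a i) (Z i))) ∧
    (⨆ o : Option (Fin t),
      o.elim (Submodule.restrictScalars K I) (fun i => stanleySpace K n (a i) (Z i))) = ⊤

/-- The Stanley depth of `S/I`. -/
noncomputable def sdepthQuot (n : ℕ) (I : Ideal (MvPolynomial (Fin n) K)) : ℕ∞ :=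
  sSup ((↑) '' {d : ℕ | ∃ (t : ℕ) (a : Fin t → (Fin n → ℕ)) (Z : Fin t → Finset (Fin n)),
    IsStanleyDecOfQuot K n I t a Z ∧ ∀ i, d ≤ (Z i).card})

/-- A Stanley decomposition of the ideal `I` itself: `I = ⊕ᵢ x^{a i} K[Z i]`
as `K`-vector spaces. -/
def IsStanleyDecOfIdeal (n : ℕ) (I : Ideal (MvPolynomial (Fin n) K)) (t : ℕ)
    (a : Fin t → (Fin n → ℕ)) (Z : Fin t → Finset (Fin n)) : Prop :=
  iSupIndep (fun i : Fin t => stanleySpace K n (a i) (Z i)) ∧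
    (⨆ i : Fin t, stanleySpace K n (a i) (Z i)) = Submodule.restrictScalars K I

/-- The Stanley depth of the ideal `I`. -/
noncomputable def sdepthIdeal (n : ℕ) (I : Ideal (MvPolynomial (Fin n) K)) : ℕ∞ :=
  sSup ((↑) '' {d : ℕ | ∃ (t : ℕ) (a : Fin t → (Fin n → ℕ)) (Z : Fin t → Finset (Fin n)),
    IsStanleyDecOfIdeal K n I t a Z ∧ ∀ i, d ≤ (Z i).card})

end Paper

open Paper

section Aux

variable (K : Type) [Field K] (n : ℕ)

lemma mono_mul (v w : Fin n → ℕ) :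
    mono K n v * mono K n w = mono K n (v + w) := by
  have hsymm : Finsupp.equivFunOnFinite.symm (v + w)
      = Finsupp.equivFunOnFinite.symm v + Finsupp.equivFunOnFinite.symm w := by
    ext k
    simp [Finsupp.coe_equivFunOnFinite_symm]
  rw [mono, mono, mono, MvPolynomial.monomial_mul, one_mul, hsymm]

lemma X_eq_mono (i : Fin n) :
    (X i : MvPolynomial (Fin n) K) = mono K n (Pi.single i 1) := by
  rw [mono, MvPolynomial.X]
  congr 1
  ext k
  simp [Finsupp.coe_equivFunOnFinite_symm, Finsupp.single_apply,
    Pi.single_apply, eq_comm]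

lemma mono_mem_of_le {J : Ideal (MvPolynomial (Fin n) K)} {v w : Fin n → ℕ}
    (hle : ∀ k, v k ≤ w k) (hv : mono K n v ∈ J) : mono K n w ∈ J := by
  have h : mono K n (w - v) * mono K n v = mono K n w := by
    rw [mono_mul]
    congr 1
    funext k
    exact Nat.sub_add_cancel (hle k)
  rw [← h]
  exact Ideal.mul_mem_left _ _ hv

lemma mem_monomialIdealOf_iff (A : Set (Fin n → ℕ)) (w : Fin n → ℕ) :
    mono K n w ∈ monomialIdealOf K n A ↔ ∃ a ∈ A, ∀ k, a k ≤ w k := by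
  classical
  have himg : (mono K n) '' A =
      (fun s => MvPolynomial.monomial s (1 : K)) '' (Finsupp.equivFunOnFinite.symm '' A) := by
    rw [Set.image_image]; rfl
  rw [monomialIdealOf, himg, mono, MvPolynomial.mem_ideal_span_monomial_image]
  have hsupp : (MvPolynomial.monomial (Finsupp.equivFunOnFinite.symm w) (1 : K)).support
      = {Finsupp.equivFunOnFinite.symm w} := by
    rw [MvPolynomial.support_monomial, if_neg one_ne_zero]
  rw [hsupp]
  constructor
  · intro h
    obtain ⟨si, ⟨a, ha, rfl⟩, hle⟩ := h _ (Finset.mem_singleton_self _)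
    exact ⟨a, ha, fun k => by simpa using hle k⟩
  · rintro ⟨a, ha, hle⟩ xi hxi
    rw [Finset.mem_singleton] at hxi
    subst hxi
    exact ⟨_, ⟨a, ha, rfl⟩, fun k => by simpa using hle k⟩

lemma exists_minGen_le (I : Ideal (MvPolynomial (Fin n) K)) :
    ∀ (N : ℕ) (c : Fin n → ℕ), (∑ k, c k) ≤ N → mono K n c ∈ I →
      ∃ v ∈ minGen K n I, ∀ k, v k ≤ c k := by
  intro N
  induction N with
  | zero =>
    intro c hsum hc
    refine ⟨c, ⟨hc, fun i hi => ?_⟩, fun k => le_rfl⟩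
    exfalso
    have : c i ≤ ∑ k, c k := Finset.single_le_sum (fun k _ => Nat.zero_le _) (Finset.mem_univ i)
    omega
  | succ N ih =>
    intro c hsum hc
    by_cases hmin : c ∈ minGen K n I
    · exact ⟨c, hmin, fun k => le_rfl⟩
    · have hex : ∃ i : Fin n, 0 < c i ∧ mono K n (c - Pi.single i 1) ∈ I := by
        simp only [minGen, Set.mem_setOf_eq, not_and, not_forall] at hmin
        obtain ⟨i, hi, hmem⟩ := hmin hc
        exact ⟨i, hi, not_not.mp hmem⟩
      obtain ⟨i, hi, hci⟩ := hex
      have hlt : (∑ k, (c - Pi.single i 1 : Fin n → ℕ) k) < ∑ k, c k := by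
        refine Finset.sum_lt_sum (fun k _ => ?_) ⟨i, Finset.mem_univ i, ?_⟩
        · exact Nat.sub_le _ _
        · simp only [Pi.sub_apply, Pi.single_eq_same]
          omega
      obtain ⟨v, hv, hle⟩ := ih (c - Pi.single i 1) (by omega) hci
      exact ⟨v, hv, fun k => (hle k).trans (Nat.sub_le _ _)⟩

lemma minGen_le_eq {I : Ideal (MvPolynomial (Fin n) K)} {a b : Fin n → ℕ}
    (ha : a ∈ minGen K n I) (hb : b ∈ minGen K n I) (hle : ∀ k, a k ≤ b k) : a = b := by
  by_contra hne
  obtain ⟨i, hi⟩ : ∃ i, a i ≠ b i := by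
    by_contra h
    push_neg at h
    exact hne (funext h)
  have hlt : a i < b i := lt_of_le_of_ne (hle i) hi
  have hle' : ∀ k, a k ≤ (b - Pi.single i 1 : Fin n → ℕ) k := by
    intro k
    by_cases hk : k = i
    · subst hk; simp only [Pi.sub_apply, Pi.single_eq_same]; omega
    · simp only [Pi.sub_apply, Pi.single_eq_of_ne hk]
      exact (hle k).trans (Nat.le_of_eq (by omega))
  exact hb.2 i (by omega) (mono_mem_of_le K n hle' ha.1)

end Aux

/-- key colon-ideal step. With `u_1 >_purelex … >_purelex u_t` the minimal
generators of a weakly polymatroidal ideal, `x_1 ∣ u_1,…,u_s` and `x_1 ∤ u_{s+1},…,u_t`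
(1-based; here 0-based), for every `i` with `s+2 ≤ i ≤ t` the colon ideal
`(u_1,…,u_{i-1}) : u_i` contains `x_1` and `(u_{s+1},…,u_{i-1}) : u_i`, while
`x_1 ∉ (u_{s+1},…,u_{i-1}) : u_i`. -/
theorem colon_step_weaklyPolymatroidal
    (K : Type) [Field K] (m t s : ℕ) (I : Ideal (MvPolynomial (Fin (m + 1)) K))
    (hI : WeaklyPolymatroidal K (m + 1) I)
    (u : Fin t → (Fin (m + 1) → ℕ))
    (hinj : Function.Injective u)
    (hrange : Set.range u = minGen K (m + 1) I)
    (hsort : ∀ i j : Fin t, i < j → toLex (u j) < toLex (u i))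
    (hs1 : 1 ≤ s) (hs2 : s ≤ t - 1)
    (hdiv : ∀ i : Fin t, ((i : ℕ) < s ↔ 0 < u i 0)) :
    ∀ i : Fin t, s + 1 ≤ (i : ℕ) →
      ((X 0 : MvPolynomial (Fin (m + 1)) K) ∈
          Submodule.colon (monomialIdealOf K (m + 1) (u '' {j | (j : ℕ) < (i : ℕ)}))
            (Ideal.span {mono K (m + 1) (u i)}) ∧
        Submodule.colon (monomialIdealOf K (m + 1) (u '' {j | s ≤ (j : ℕ) ∧ (j : ℕ) < (i : ℕ)}))
            (Ideal.span {mono K (m + 1) (u i)}) ≤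
          Submodule.colon (monomialIdealOf K (m + 1) (u '' {j | (j : ℕ) < (i : ℕ)}))
            (Ideal.span {mono K (m + 1) (u i)})) ∧
      (X 0 : MvPolynomial (Fin (m + 1)) K) ∉
        Submodule.colon (monomialIdealOf K (m + 1) (u '' {j | s ≤ (j : ℕ) ∧ (j : ℕ) < (i : ℕ)}))
          (Ideal.span {mono K (m + 1) (u i)}) := by
  obtain ⟨hIm, hwp⟩ := hI
  intro i hi
  have ht : 0 < t := i.pos
  set b := u i with hbdef
  have hbmem : b ∈ minGen K (m + 1) I := hrange ▸ Set.mem_range_self i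
  have hb0 : b 0 = 0 := by
    have h := (hdiv i).mpr
    by_contra hne
    have := h (Nat.pos_of_ne_zero hne)
    omega
  -- Claim A : X 0 * mono b ∈ ideal of earlier generators
  have hXmul : (X 0 : MvPolynomial (Fin (m + 1)) K) * mono K (m + 1) b
      = mono K (m + 1) (Pi.single 0 1 + b) := by
    rw [X_eq_mono, mono_mul]
  set z : Fin t := ⟨0, ht⟩ with hzdef
  have hamem : u z ∈ minGen K (m + 1) I := hrange ▸ Set.mem_range_self z
  have ha0 : 0 < u z 0 := (hdiv z).mp (by simp [hzdef]; omega)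
  obtain ⟨j, hj0, hbj, hcI⟩ := hwp (u z) b hamem hbmem 0
    (fun s' hs' => absurd hs' (by simp)) (by omega)
  set c : Fin (m + 1) → ℕ := b + Pi.single 0 1 - Pi.single j 1 with hcdef
  have hc0 : c 0 = 1 := by
    simp only [hcdef, Pi.sub_apply, Pi.add_apply, Pi.single_eq_same,
      Pi.single_eq_of_ne hj0.ne, hb0]
    omega
  obtain ⟨v, hv, hvle⟩ := exists_minGen_le K (m + 1) I (∑ k, c k) c le_rfl hcI
  have hck : ∀ k, k ≠ 0 → c k ≤ b k := by
    intro k hk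
    simp only [hcdef, Pi.sub_apply, Pi.add_apply, Pi.single_eq_of_ne hk, Pi.single_apply]
    split_ifs <;> omega
  have hcj : c j = b j - 1 := by
    simp only [hcdef, Pi.sub_apply, Pi.add_apply, Pi.single_eq_same,
      Pi.single_eq_of_ne hj0.ne']
    omega
  have hv0 : v 0 = 1 := by
    have h1 : v 0 ≤ 1 := le_trans (hvle 0) (le_of_eq hc0)
    rcases Nat.lt_or_ge (v 0) 1 with h | h
    · exfalso
      have hvb : ∀ k, v k ≤ b k := by
        intro k
        by_cases hk : k = (0 : Fin (m + 1))
        · subst hk; omega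
        · exact (hvle k).trans (hck k hk)
      have heq : v = b := minGen_le_eq K (m + 1) hv hbmem hvb
      have := hvle j
      rw [heq] at this
      omega
    · omega
  obtain ⟨k, hkv⟩ : ∃ k, u k = v := by
    have : v ∈ Set.range u := hrange ▸ hv
    exact this
  have hki : k < i := by
    by_contra hki
    rcases eq_or_lt_of_le (not_lt.mp hki) with h | h
    · have : v = b := by rw [← hkv, ← h]
      rw [this, hb0] at hv0
      exact one_ne_zero hv0.symm
    · have h1 : toLex (u k) < toLex (u i) := hsort i k h
      have h2 : toLex b < toLex v := by
        refine ⟨0, fun j' hj' => absurd hj' (by simp), ?_⟩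
        show b 0 < v 0
        omega
      rw [hkv, ← hbdef] at h1
      exact lt_asymm h1 h2
  have claimA : (X 0 : MvPolynomial (Fin (m + 1)) K) * mono K (m + 1) b ∈
      monomialIdealOf K (m + 1) (u '' {j' : Fin t | (j' : ℕ) < (i : ℕ)}) := by
    rw [hXmul, mem_monomialIdealOf_iff]
    refine ⟨v, ⟨k, hki, hkv⟩, fun k' => ?_⟩
    have h1 := hvle k'
    by_cases hk' : k' = (0 : Fin (m + 1))
    · subst hk'
      simp only [Pi.add_apply, Pi.single_eq_same]
      omega
    · have h2 := hck k' hk'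
      simp only [Pi.add_apply, Pi.single_eq_of_ne hk']
      omega
  refine ⟨⟨Ideal.mem_colon_span_singleton.mpr claimA, ?_⟩, ?_⟩
  · exact Submodule.colon_mono
      (Ideal.span_mono (Set.image_mono (Set.image_mono (f := u) (fun j' hj' => hj'.2)))) le_rfl
  · -- X 0 ∉ colon of later-only generators
    intro hmem
    have hmul := Ideal.mem_colon_span_singleton.mp hmem
    rw [hXmul, mem_monomialIdealOf_iff] at hmul
    obtain ⟨w, ⟨j', ⟨hj's, hj'i⟩, rfl⟩, hwle⟩ := hmul
    have hj'0 : u j' 0 = 0 := by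
      have h := (hdiv j').mpr
      by_contra hne
      have := h (Nat.pos_of_ne_zero hne)
      omega
    have hwb : ∀ k', u j' k' ≤ b k' := by
      intro k'
      have h1 := hwle k'
      by_cases hk' : k' = (0 : Fin (m + 1))
      · subst hk'; omega
      · simp only [Pi.add_apply, Pi.single_eq_of_ne hk'] at h1
        omega
    have heq : u j' = b := minGen_le_eq K (m + 1) (hrange ▸ Set.mem_range_self j') hbmem hwb
    have : j' = i := hinj heq
    omega
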